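/- The matrix A is invertible and the maximum-column-sum norm of its inverse equals one: |||A⁻¹|||₁ = 1 (Theorem 2, Property 2). -/

import Mathlib

open Matrix Finset

/-- **Theorem 2, Property 2.** If `A` is an `n × n` real matrix (`n ≥ 1`) whose
off-diagonal entries are nonpositive and whose diagonal entries satisfy
`A i i = 1 - ∑_{j ≠ i} A j i`, then `A` is invertible and the maximum-column-sum
norm of `A⁻¹` equals one: `|||A⁻¹|||₁ = max_j ∑_i |A⁻¹ i j| = 1`. -/
theorem matrix_column_stochastic_M_matrix_inv_one_norm
    (n : ℕ) (hn : 1 ≤ n) (A : Matrix (Fin n) (Fin n) ℝ)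
    (hoff : ∀ i j, i ≠ j → A i j ≤ 0)
    (hdiag : ∀ i, A i i = 1 - ∑ j ∈ Finset.univ.erase i, A j i) :
    IsUnit A ∧
      Finset.univ.sup' (Finset.univ_nonempty_iff.mpr (Fin.pos_iff_nonempty.mp hn))
        (fun j => ∑ i, |A⁻¹ i j|) = 1 := by
  -- column sums of A are 1
  have colsum : ∀ m, ∑ k, A k m = 1 := by
    intro m
    rw [← Finset.add_sum_erase _ _ (Finset.mem_univ m), hdiag m]
    ring
  -- determinant nonzero via column diagonal dominance
  have hdet : A.det ≠ 0 := by
    apply det_ne_zero_of_sum_col_lt_diag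
    intro k
    have h1 : ∑ i ∈ Finset.univ.erase k, ‖A i k‖ = -∑ i ∈ Finset.univ.erase k, A i k := by
      rw [← Finset.sum_neg_distrib]
      apply Finset.sum_congr rfl
      intro i hi
      rw [Real.norm_eq_abs, abs_of_nonpos (hoff i k (Finset.ne_of_mem_erase hi))]
    have h2 : (0:ℝ) ≤ -∑ i ∈ Finset.univ.erase k, A i k := by
      rw [neg_nonneg]
      exact Finset.sum_nonpos fun i hi => hoff i k (Finset.ne_of_mem_erase hi)
    have h3 : A k k = 1 + -∑ i ∈ Finset.univ.erase k, A i k := by rw [hdiag k]; ring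
    rw [h1, Real.norm_eq_abs, abs_of_nonneg (by rw [h3]; linarith), h3]
    linarith
  have hU : IsUnit A := (Matrix.isUnit_iff_isUnit_det A).mpr (isUnit_iff_ne_zero.mpr hdet)
  have hBA : A⁻¹ * A = 1 := Matrix.nonsing_inv_mul A (isUnit_iff_ne_zero.mpr hdet)
  have hAB : A * A⁻¹ = 1 := Matrix.mul_nonsing_inv A (isUnit_iff_ne_zero.mpr hdet)
  set B := A⁻¹ with hB
  -- B is entrywise nonnegative
  have hBnn : ∀ i j, 0 ≤ B i j := by
    intro i j
    by_contra hneg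
    push_neg at hneg
    -- take the minimal entry of row i of B
    obtain ⟨m, -, hm⟩ := Finset.exists_min_image Finset.univ (fun k => B i k)
      ⟨j, Finset.mem_univ j⟩
    have hmneg : B i m < 0 := lt_of_le_of_lt (hm j (Finset.mem_univ j)) hneg
    have key : (B * A) i m ≤ B i m := by
      calc (B * A) i m = ∑ k, B i k * A k m := Matrix.mul_apply
        _ ≤ ∑ k, B i m * A k m := by
            apply Finset.sum_le_sum
            intro k _
            rcases eq_or_ne k m with hk | hk
            · subst hk; exact le_rfl
            · exact mul_le_mul_of_nonpos_right (hm k (Finset.mem_univ k)) (hoff k m hk)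
        _ = B i m * ∑ k, A k m := by rw [Finset.mul_sum]
        _ = B i m := by rw [colsum m, mul_one]
    have hpos : (0:ℝ) ≤ (B * A) i m := by
      rw [hBA]
      rcases eq_or_ne i m with him | him <;> simp [Matrix.one_apply, him]
    linarith
  -- column sums of B are 1
  have hcolB : ∀ j, ∑ i, B i j = 1 := by
    intro j
    have h1 : ∑ i, (A * B) i j = 1 := by
      rw [hAB]
      simp [Matrix.one_apply]
    have h2 : ∑ i, (A * B) i j = ∑ k, B k j := by
      simp_rw [Matrix.mul_apply]
      rw [Finset.sum_comm]
      apply Finset.sum_congr rfl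
      intro k _
      rw [← Finset.sum_mul, colsum k, one_mul]
    rw [← h2, h1]
  refine ⟨hU, ?_⟩
  have hf : ∀ j, ∑ i, |B i j| = 1 := by
    intro j
    rw [← hcolB j]
    exact Finset.sum_congr rfl fun i _ => abs_of_nonneg (hBnn i j)
  apply le_antisymm
  · apply Finset.sup'_le
    intro j _
    rw [hf j]
  · obtain ⟨j⟩ := Fin.pos_iff_nonempty.mp hn
    have := Finset.le_sup' (fun j => ∑ i, |B i j|) (Finset.mem_univ j)
    rwa [hf j] at this
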